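/- arXiv:0705.1576 — 3 statements merged into one kernel-verified Lean document; each statement's English description precedes it below -/
import Mathlib

section
/- Let F be a field with char F ≠ 2 and D = ℍ[F, c₁, c₂] the quaternion algebra with c₁ ≠ 0 and c₂ ≠ 0. Let g be a 2×2 matrix over D and z ∈ F. Then z·(g·X·gᴴ) = X for every Hermitian 2×2 matrix X over D (i.e. every X with Xᴴ = X) if and only if there exists t ∈ Fˣ such that g = t·I₂ and z = t⁻². -/
open Matrix

open Quaternion

/-- `(g, z)` acts trivially on all Hermitian `2×2` matrices over a quaternion
algebra via `X ↦ z·g·X·gᴴ` iff `g = t·1` is scalar and `z = t⁻²`. -/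
theorem stmt_6 {F : Type*} [Field F] (h2 : (2 : F) ≠ 0)
    (c₁ c₂ : F) (hc₁ : c₁ ≠ 0) (hc₂ : c₂ ≠ 0)
    (g : Matrix (Fin 2) (Fin 2) ℍ[F, c₁, c₂]) (z : F) :
    (∀ X : Matrix (Fin 2) (Fin 2) ℍ[F, c₁, c₂], Xᴴ = X → z • (g * X * gᴴ) = X) ↔
    ∃ t : Fˣ, g = (t : F) • (1 : Matrix (Fin 2) (Fin 2) ℍ[F, c₁, c₂]) ∧
      z = ((t : F) ^ 2)⁻¹ := by
  constructor
  · intro h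
    -- test matrices
    have hX1 : (!![(1:ℍ[F,c₁,c₂]),0;0,0])ᴴ = !![(1:ℍ[F,c₁,c₂]),0;0,0] := by
      refine Matrix.ext fun i j => ?_
      fin_cases i <;> fin_cases j <;> simp [Matrix.conjTranspose_apply]
    have hX2 : (!![(0:ℍ[F,c₁,c₂]),0;0,1])ᴴ = !![(0:ℍ[F,c₁,c₂]),0;0,1] := by
      refine Matrix.ext fun i j => ?_
      fin_cases i <;> fin_cases j <;> simp [Matrix.conjTranspose_apply]
    have hXq : ∀ q : ℍ[F,c₁,c₂], (!![(0:ℍ[F,c₁,c₂]),q;star q,0])ᴴ = !![(0:ℍ[F,c₁,c₂]),q;star q,0] := by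
      intro q
      refine Matrix.ext fun i j => ?_
      fin_cases i <;> fin_cases j <;> simp [Matrix.conjTranspose_apply]
    have h1 := h _ hX1
    have h2' := h _ hX2
    -- E1 : z • (a * star a) = 1
    have E1 : z • (g 0 0 * star (g 0 0)) = 1 := by
      have e : (z • (g * !![(1:ℍ[F,c₁,c₂]),0;0,0] * gᴴ)) 0 0 = !![(1:ℍ[F,c₁,c₂]),0;0,0] 0 0 := by
        rw [h1]
      simpa [Matrix.mul_apply, Fin.sum_univ_two, Matrix.conjTranspose_apply] using e
    have E3 : z • (g 1 0 * star (g 0 0)) = 0 := by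
      have e : (z • (g * !![(1:ℍ[F,c₁,c₂]),0;0,0] * gᴴ)) 1 0 = !![(1:ℍ[F,c₁,c₂]),0;0,0] 1 0 := by
        rw [h1]
      simpa [Matrix.mul_apply, Fin.sum_univ_two, Matrix.conjTranspose_apply] using e
    have E4 : z • (g 1 1 * star (g 1 1)) = 1 := by
      have e : (z • (g * !![(0:ℍ[F,c₁,c₂]),0;0,1] * gᴴ)) 1 1 = !![(0:ℍ[F,c₁,c₂]),0;0,1] 1 1 := by
        rw [h2']
      simpa [Matrix.mul_apply, Fin.sum_univ_two, Matrix.conjTranspose_apply] using e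
    have E2 : z • (g 0 1 * star (g 1 1)) = 0 := by
      have e : (z • (g * !![(0:ℍ[F,c₁,c₂]),0;0,1] * gᴴ)) 0 1 = !![(0:ℍ[F,c₁,c₂]),0;0,1] 0 1 := by
        rw [h2']
      simpa [Matrix.mul_apply, Fin.sum_univ_two, Matrix.conjTranspose_apply] using e
    -- z ≠ 0
    have hz : z ≠ 0 := by
      rintro rfl
      rw [zero_smul] at E1
      exact one_ne_zero E1.symm
    -- the inverse of a := g 0 0
    have hab : g 0 0 * (z • star (g 0 0)) = 1 := by rw [mul_smul_comm, E1]
    have hba : (z • star (g 0 0)) * g 0 0 = 1 := by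
      rw [smul_mul_assoc, star_comm_self', E1]
    have hdd : (z • star (g 1 1)) * g 1 1 = 1 := by
      rw [smul_mul_assoc, star_comm_self', E4]
    -- off-diagonal entries vanish
    have hc0 : g 1 0 = 0 := by
      have h5 : g 1 0 * (z • star (g 0 0)) = 0 := by rw [mul_smul_comm, E3]
      calc g 1 0 = g 1 0 * ((z • star (g 0 0)) * g 0 0) := by rw [hba, mul_one]
        _ = (g 1 0 * (z • star (g 0 0))) * g 0 0 := by rw [mul_assoc]
        _ = 0 := by rw [h5, zero_mul]
    have hb0 : g 0 1 = 0 := by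
      have h5 : g 0 1 * (z • star (g 1 1)) = 0 := by rw [mul_smul_comm, E2]
      calc g 0 1 = g 0 1 * ((z • star (g 1 1)) * g 1 1) := by rw [hdd, mul_one]
        _ = (g 0 1 * (z • star (g 1 1))) * g 1 1 := by rw [mul_assoc]
        _ = 0 := by rw [h5, zero_mul]
    -- diagonal entries agree
    have E5 : z • (g 0 0 * star (g 1 1)) = 1 := by
      have h3 := h _ (hXq 1)
      have e : (z • (g * !![(0:ℍ[F,c₁,c₂]),1;star 1,0] * gᴴ)) 0 1
          = !![(0:ℍ[F,c₁,c₂]),1;star 1,0] 0 1 := by rw [h3]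
      simpa [Matrix.mul_apply, Fin.sum_univ_two, Matrix.conjTranspose_apply, hb0, hc0] using e
    have hda : g 1 1 = g 0 0 := by
      have h6 : g 0 0 * (z • star (g 1 1)) = 1 := by rw [mul_smul_comm, E5]
      have h7 : z • star (g 1 1) = z • star (g 0 0) := by
        calc z • star (g 1 1) = ((z • star (g 0 0)) * g 0 0) * (z • star (g 1 1)) := by
              rw [hba, one_mul]
          _ = (z • star (g 0 0)) * (g 0 0 * (z • star (g 1 1))) := by rw [mul_assoc]
          _ = z • star (g 0 0) := by rw [h6, mul_one]
      have h8 : star (g 1 1) = star (g 0 0) := by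
        have h9 := congrArg (fun x => z⁻¹ • x) h7
        simpa [smul_smul, inv_mul_cancel₀ hz] using h9
      exact star_injective h8
    -- a is central
    have hcomm : ∀ q : ℍ[F,c₁,c₂], g 0 0 * q = q * g 0 0 := by
      intro q
      have h3 := h _ (hXq q)
      have e : (z • (g * !![(0:ℍ[F,c₁,c₂]),q;star q,0] * gᴴ)) 0 1
          = !![(0:ℍ[F,c₁,c₂]),q;star q,0] 0 1 := by rw [h3]
      have E : z • (g 0 0 * q * star (g 0 0)) = q := by
        simpa [Matrix.mul_apply, Fin.sum_univ_two, Matrix.conjTranspose_apply, hb0, hc0, hda] using e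
      have h10 : g 0 0 * q * (z • star (g 0 0)) = q := by rw [mul_smul_comm, E]
      calc g 0 0 * q = g 0 0 * q * ((z • star (g 0 0)) * g 0 0) := by rw [hba, mul_one]
        _ = (g 0 0 * q * (z • star (g 0 0))) * g 0 0 := by rw [← mul_assoc]
        _ = q * g 0 0 := by rw [h10]
    -- hence a is a scalar
    have hi := hcomm ⟨0,1,0,0⟩
    have hj := hcomm ⟨0,0,1,0⟩
    have e1 := congrArg QuaternionAlgebra.imJ hi
    have e2 := congrArg QuaternionAlgebra.imK hi
    have e3 := congrArg QuaternionAlgebra.imK hj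
    simp only [QuaternionAlgebra.imJ_mul, QuaternionAlgebra.imK_mul] at e1 e2 e3
    have hI : (g 0 0).imI = 0 := by
      have h4 : (2:F) * (g 0 0).imI = 0 := by linear_combination e3
      exact (mul_eq_zero.mp h4).resolve_left h2
    have hJ : (g 0 0).imJ = 0 := by
      have h4 : (2:F) * (g 0 0).imJ = 0 := by linear_combination -e2
      exact (mul_eq_zero.mp h4).resolve_left h2
    have hK : (g 0 0).imK = 0 := by
      have h4 : ((2:F)*c₁) * (g 0 0).imK = 0 := by linear_combination -e1
      exact (mul_eq_zero.mp h4).resolve_left (mul_ne_zero h2 hc₁)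
    have hcoe : g 0 0 = ((g 0 0).re : ℍ[F,c₁,c₂]) := by
      ext <;> simp [hI, hJ, hK]
    obtain ⟨w, hw⟩ : ∃ w : F, g 0 0 = (w : ℍ[F,c₁,c₂]) := ⟨_, hcoe⟩
    -- extract the scalar equation in F
    have hzw : z * (w * w) = 1 := by
      have E1' := E1
      rw [hw, QuaternionAlgebra.star_coe, ← QuaternionAlgebra.coe_mul,
        QuaternionAlgebra.smul_coe, ← QuaternionAlgebra.coe_one] at E1'
      exact QuaternionAlgebra.coe_injective E1'
    have hw0 : w ≠ 0 := by
      rintro rfl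
      rw [mul_zero, mul_zero] at hzw
      exact zero_ne_one hzw
    refine ⟨Units.mk0 _ hw0, ?_, ?_⟩
    · show g = w • (1 : Matrix (Fin 2) (Fin 2) ℍ[F,c₁,c₂])
      refine Matrix.ext fun i j => ?_
      have hs : w • (1 : ℍ[F,c₁,c₂]) = (w : ℍ[F,c₁,c₂]) := by
        rw [← QuaternionAlgebra.coe_one, QuaternionAlgebra.smul_coe, mul_one]
      fin_cases i <;> fin_cases j <;>
        simp [Matrix.one_apply, hb0, hc0, hda, hs, hw]
    · show z = (w ^ 2)⁻¹
      refine (inv_eq_of_mul_eq_one_left ?_).symm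
      rw [sq]; exact hzw
  · rintro ⟨t, rfl, rfl⟩
    intro X _
    have hg : ((t:F) • (1 : Matrix (Fin 2) (Fin 2) ℍ[F,c₁,c₂]))ᴴ
        = (t:F) • (1 : Matrix (Fin 2) (Fin 2) ℍ[F,c₁,c₂]) := by
      refine Matrix.ext fun i j => ?_
      rcases eq_or_ne i j with rfl | hij
      · simp [Matrix.conjTranspose_apply, Matrix.one_apply, QuaternionAlgebra.star_smul]
      · simp [Matrix.conjTranspose_apply, Matrix.one_apply, hij, Ne.symm hij]
    rw [hg, smul_mul_assoc, one_mul, mul_smul_comm, mul_one, smul_smul, smul_smul]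
    have ht : ((t:F)^2)⁻¹ * (t:F) * (t:F) = 1 := by
      have h0 : ((t:F))^2 ≠ 0 := pow_ne_zero 2 t.ne_zero
      field_simp
    rw [ht, one_smul]
end

section
/- Let k be an algebraically closed field, V₀ a 2-dimensional k-vector space, φ₀ : G → GL(V₀) an irreducible representation of a group G, and μ : G → kˣ a character with det(φ₀(g)) = μ(g) for all g ∈ G. Consider the representation φ = φ₀ ⊕ φ₀ of G on V = V₀ ⊕ V₀. Then the space of alternating bilinear forms B on V (B(v,v) = 0 for all v) satisfying B(φ(g)v, φ(g)w) = μ(g)·B(v,w) for all g, v, w has dimension exactly 3 over k. -/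
set_option synthInstance.maxHeartbeats 1000000
set_option maxHeartbeats 1000000

open Module

section Aux
variable {k V₀ : Type*} [Field k] [AddCommGroup V₀] [Module k V₀]

noncomputable def omegaForm (b : Basis (Fin 2) k V₀) : V₀ →ₗ[k] V₀ →ₗ[k] k :=
  LinearMap.mk₂ k (fun v w => b.repr v 0 * b.repr w 1 - b.repr v 1 * b.repr w 0)
    (fun v v' w => by simp only [map_add, Finsupp.add_apply]; ring)
    (fun c v w => by simp only [map_smul, Finsupp.smul_apply, smul_eq_mul]; ring)
    (fun v w w' => by simp only [map_add, Finsupp.add_apply]; ring)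
    (fun c v w => by simp only [map_smul, Finsupp.smul_apply, smul_eq_mul]; ring)

lemma omegaForm_apply (b : Basis (Fin 2) k V₀) (v w : V₀) :
    omegaForm b v w = b.repr v 0 * b.repr w 1 - b.repr v 1 * b.repr w 0 := rfl

lemma omegaForm_eq_det (b : Basis (Fin 2) k V₀) (v w : V₀) :
    omegaForm b v w = b.det ![v, w] := by
  rw [Basis.det_apply, Matrix.det_fin_two, omegaForm_apply]
  simp [Basis.toMatrix_apply, mul_comm]

lemma omegaForm_self (b : Basis (Fin 2) k V₀) (v : V₀) : omegaForm b v v = 0 := by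
  rw [omegaForm_apply]; ring

lemma omegaForm_antisymm (b : Basis (Fin 2) k V₀) (v w : V₀) :
    omegaForm b v w + omegaForm b w v = 0 := by
  rw [omegaForm_apply, omegaForm_apply]; ring

lemma omegaForm_basis (b : Basis (Fin 2) k V₀) : omegaForm b (b 0) (b 1) = 1 := by
  rw [omegaForm_apply]
  simp [Basis.repr_self, Finsupp.single_apply]

lemma omegaForm_comp (b : Basis (Fin 2) k V₀) (f : V₀ →ₗ[k] V₀) (v w : V₀) :
    omegaForm b (f v) (f w) = LinearMap.det f * omegaForm b v w := by
  rw [omegaForm_eq_det, omegaForm_eq_det]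
  have h : ![f v, f w] = ⇑f ∘ ![v, w] := by
    funext i; fin_cases i <;> rfl
  rw [h, Basis.det_comp]

lemma omegaForm_nondeg (b : Basis (Fin 2) k V₀) (v : V₀)
    (h : ∀ w, omegaForm b v w = 0) : v = 0 := by
  have h0 := h (b 0); have h1 := h (b 1)
  rw [omegaForm_apply] at h0 h1
  simp [Basis.repr_self, Finsupp.single_apply] at h0 h1
  rw [← b.repr.map_eq_zero_iff]
  ext i
  fin_cases i <;> simp [h0, h1]

lemma schur_bilinear {G : Type*} [IsAlgClosed k] [FiniteDimensional k V₀] [Group G]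
    (b : Basis (Fin 2) k V₀)
    (φ₀ : G →* (V₀ ≃ₗ[k] V₀))
    (hirr : ∀ W : Submodule k V₀, (∀ g : G, ∀ v ∈ W, φ₀ g v ∈ W) → W = ⊥ ∨ W = ⊤)
    (μ : G →* kˣ)
    (hdet : ∀ g : G, LinearMap.det (φ₀ g : V₀ →ₗ[k] V₀) = (μ g : k))
    (β : V₀ →ₗ[k] V₀ →ₗ[k] k)
    (hβ : ∀ (g : G) (v w : V₀), β (φ₀ g v) (φ₀ g w) = (μ g : k) * β v w) :
    ∃ c : k, β = c • omegaForm b := by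
  set ω := omegaForm b with hω
  let T : V₀ →ₗ[k] V₀ :=
    { toFun := fun v => β v (b 1) • b 0 - β v (b 0) • b 1
      map_add' := fun v w => by
        simp only [map_add, LinearMap.add_apply, add_smul]
        abel
      map_smul' := fun c v => by
        simp only [map_smul, LinearMap.smul_apply, smul_eq_mul, RingHom.id_apply,
          smul_sub, smul_smul] }
  have hTapp : ∀ v, T v = β v (b 1) • b 0 - β v (b 0) • b 1 := fun _ => rfl
  have hT : ∀ v w, ω (T v) w = β v w := by
    intro v w
    have hw : w = b.repr w 0 • b 0 + b.repr w 1 • b 1 := by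
      have h := b.sum_repr w
      rw [Fin.sum_univ_two] at h; exact h.symm
    have h0 : b.repr (T v) 0 = β v (b 1) := by
      rw [hTapp]
      simp [Basis.repr_self, Finsupp.single_apply]
    have h1 : b.repr (T v) 1 = - β v (b 0) := by
      rw [hTapp]
      simp [Basis.repr_self, Finsupp.single_apply]
    rw [hω, omegaForm_apply, h0, h1]
    conv_rhs => rw [hw]
    simp only [map_add, map_smul, smul_eq_mul]
    ring
  have hcomm : ∀ (g : G) (v : V₀), T (φ₀ g v) = φ₀ g (T v) := by
    intro g v
    have key : ∀ w, ω (T (φ₀ g v) - φ₀ g (T v)) w = 0 := by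
      intro w
      obtain ⟨u, rfl⟩ : ∃ u, φ₀ g u = w := ⟨(φ₀ g).symm w, (φ₀ g).apply_symm_apply w⟩
      have e2 : ω (φ₀ g (T v)) (φ₀ g u) = (μ g : k) * ω (T v) u := by
        have h := omegaForm_comp b ((φ₀ g : V₀ ≃ₗ[k] V₀) : V₀ →ₗ[k] V₀) (T v) u
        rw [hdet] at h
        simpa [hω] using h
      rw [map_sub, LinearMap.sub_apply, hT, e2, hβ, hT]
      ring
    have h := omegaForm_nondeg b _ (fun w => by rw [← hω]; exact key w)
    exact sub_eq_zero.mp h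
  have hnt : Nontrivial V₀ := ⟨⟨b 0, 0, b.ne_zero 0⟩⟩
  obtain ⟨c, hc⟩ := Module.End.exists_eigenvalue (T : Module.End k V₀)
  set W := Module.End.eigenspace (T : Module.End k V₀) c with hW
  have hWinv : ∀ g : G, ∀ v ∈ W, φ₀ g v ∈ W := by
    intro g v hv
    rw [hW, Module.End.mem_eigenspace_iff] at hv ⊢
    rw [hcomm, hv, map_smul]
  rcases hirr W hWinv with h | h
  · exact absurd h hc
  · have hTv : ∀ v, T v = c • v := by
      intro v
      have : v ∈ W := h ▸ Submodule.mem_top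
      rwa [hW, Module.End.mem_eigenspace_iff] at this
    refine ⟨c, ?_⟩
    ext v w
    rw [← hT v w, hTv v, map_smul]
    simp [hω]

end Aux

/-- For `φ = φ₀ ⊕ φ₀` with `φ₀` irreducible `2`-dimensional and `det φ₀ = μ`,
the space of `μ`-equivariant alternating bilinear forms has dimension `3`. -/
theorem stmt_10 {k G V₀ : Type*} [Field k] [IsAlgClosed k] [AddCommGroup V₀]
    [Module k V₀] [FiniteDimensional k V₀] [Group G]
    (hdim : Module.finrank k V₀ = 2)
    (φ₀ : G →* (V₀ ≃ₗ[k] V₀))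
    (hirr : ∀ W : Submodule k V₀, (∀ g : G, ∀ v ∈ W, φ₀ g v ∈ W) → W = ⊥ ∨ W = ⊤)
    (μ : G →* kˣ)
    (hdet : ∀ g : G, LinearMap.det (φ₀ g : V₀ →ₗ[k] V₀) = (μ g : k)) :
    ∃ S : Submodule k (((V₀ × V₀) →ₗ[k] (V₀ × V₀) →ₗ[k] k)),
      (S : Set (((V₀ × V₀) →ₗ[k] (V₀ × V₀) →ₗ[k] k))) =
        {B | (∀ v, B v v = 0) ∧
          ∀ (g : G) (v w : V₀ × V₀),
            B (φ₀ g v.1, φ₀ g v.2) (φ₀ g w.1, φ₀ g w.2) = (μ g : k) * B v w} ∧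
      Module.finrank k S = 3 := by
  classical
  let b : Basis (Fin 2) k V₀ := finBasisOfFinrankEq k V₀ hdim
  set ω := omegaForm b with hω
  have hωeq : ∀ (g : G) (v w : V₀), ω (φ₀ g v) (φ₀ g w) = (μ g : k) * ω v w := by
    intro g v w
    have h := omegaForm_comp b ((φ₀ g : V₀ ≃ₗ[k] V₀) : V₀ →ₗ[k] V₀) v w
    rw [hdet] at h
    simpa [hω] using h
  let fst := LinearMap.fst k V₀ V₀
  let snd := LinearMap.snd k V₀ V₀
  let B1 : (V₀ × V₀) →ₗ[k] (V₀ × V₀) →ₗ[k] k := (ω.comp fst).compl₂ fst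
  let B2 : (V₀ × V₀) →ₗ[k] (V₀ × V₀) →ₗ[k] k := (ω.comp snd).compl₂ snd
  let B3 : (V₀ × V₀) →ₗ[k] (V₀ × V₀) →ₗ[k] k :=
    (ω.comp fst).compl₂ snd + (ω.comp snd).compl₂ fst
  have hB1 : ∀ v w : V₀ × V₀, B1 v w = ω v.1 w.1 := fun v w => rfl
  have hB2 : ∀ v w : V₀ × V₀, B2 v w = ω v.2 w.2 := fun v w => rfl
  have hB3 : ∀ v w : V₀ × V₀, B3 v w = ω v.1 w.2 + ω v.2 w.1 := fun v w => rfl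
  refine ⟨Submodule.span k (Set.range ![B1, B2, B3]), ?_, ?_⟩
  · apply Set.Subset.antisymm
    · intro x hx
      have pB1 : (∀ v, B1 v v = 0) ∧ ∀ (g : G) (v w : V₀ × V₀),
          B1 (φ₀ g v.1, φ₀ g v.2) (φ₀ g w.1, φ₀ g w.2) = (μ g : k) * B1 v w :=
        ⟨fun v => by rw [hB1, hω, omegaForm_self],
          fun g v w => by rw [hB1, hB1]; exact hωeq g v.1 w.1⟩
      have pB2 : (∀ v, B2 v v = 0) ∧ ∀ (g : G) (v w : V₀ × V₀),
          B2 (φ₀ g v.1, φ₀ g v.2) (φ₀ g w.1, φ₀ g w.2) = (μ g : k) * B2 v w :=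
        ⟨fun v => by rw [hB2, hω, omegaForm_self],
          fun g v w => by rw [hB2, hB2]; exact hωeq g v.2 w.2⟩
      have pB3 : (∀ v, B3 v v = 0) ∧ ∀ (g : G) (v w : V₀ × V₀),
          B3 (φ₀ g v.1, φ₀ g v.2) (φ₀ g w.1, φ₀ g w.2) = (μ g : k) * B3 v w :=
        ⟨fun v => by rw [hB3, hω]; exact omegaForm_antisymm b v.1 v.2,
          fun g v w => by rw [hB3, hB3, hωeq, hωeq]; ring⟩
      refine Submodule.span_induction ?_ ?_ ?_ ?_ hx
      · rintro y ⟨i, rfl⟩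
        fin_cases i
        exacts [pB1, pB2, pB3]
      · exact ⟨fun v => rfl, fun g v w => by simp⟩
      · rintro x y - - ⟨hx1, hx2⟩ ⟨hy1, hy2⟩
        refine ⟨fun v => ?_, fun g v w => ?_⟩
        · simp [hx1 v, hy1 v]
        · simp only [LinearMap.add_apply]
          rw [hx2 g v w, hy2 g v w]; ring
      · rintro c x - ⟨hx1, hx2⟩
        refine ⟨fun v => ?_, fun g v w => ?_⟩
        · simp [hx1 v]
        · simp only [LinearMap.smul_apply, smul_eq_mul]
          rw [hx2 g v w]; ring
    · rintro B ⟨hBalt, hBeq⟩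
      let inl := LinearMap.inl k V₀ V₀
      let inr := LinearMap.inr k V₀ V₀
      have key : ∀ (f f' : V₀ →ₗ[k] V₀ × V₀)
          (hf : ∀ g v, f (φ₀ g v) = (φ₀ g (f v).1, φ₀ g (f v).2))
          (hf' : ∀ g v, f' (φ₀ g v) = (φ₀ g (f' v).1, φ₀ g (f' v).2)),
          ∃ c : k, (B.comp f).compl₂ f' = c • ω := by
        intro f f' hf hf'
        apply schur_bilinear b φ₀ hirr μ hdet
        intro g v w
        simp only [LinearMap.compl₂_apply, LinearMap.comp_apply]
        rw [hf, hf']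
        exact hBeq g (f v) (f' w)
      have hinl : ∀ (g : G) (v : V₀), inl (φ₀ g v) = (φ₀ g (inl v).1, φ₀ g (inl v).2) := by
        intro g v; simp [inl]
      have hinr : ∀ (g : G) (v : V₀), inr (φ₀ g v) = (φ₀ g (inr v).1, φ₀ g (inr v).2) := by
        intro g v; simp [inr]
      obtain ⟨c11, h11⟩ := key inl inl hinl hinl
      obtain ⟨c12, h12⟩ := key inl inr hinl hinr
      obtain ⟨c21, h21⟩ := key inr inl hinr hinl
      obtain ⟨c22, h22⟩ := key inr inr hinr hinr
      have happ : ∀ (f f' : V₀ →ₗ[k] V₀ × V₀) (c : k) (h : (B.comp f).compl₂ f' = c • ω)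
          (v w : V₀), B (f v) (f' w) = c * ω v w := by
        intro f f' c h v w
        have h2 := LinearMap.congr_fun (LinearMap.congr_fun h v) w
        simpa using h2
      have hd : ∀ x1 x2 y1 y2 : V₀,
          B (x1, x2) (y1, y2) = c11 * ω x1 y1 + c12 * ω x1 y2 + c21 * ω x2 y1 + c22 * ω x2 y2 := by
        intro x1 x2 y1 y2
        have hv : (x1, x2) = inl x1 + inr x2 := by simp [inl, inr, Prod.ext_iff]
        have hw : (y1, y2) = inl y1 + inr y2 := by simp [inl, inr, Prod.ext_iff]
        rw [hv, hw]
        simp only [map_add, LinearMap.add_apply]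
        rw [happ inl inl c11 h11, happ inl inr c12 h12, happ inr inl c21 h21,
          happ inr inr c22 h22]
        ring
      have e00 : ω (b 0) (b 0) = 0 := by rw [hω]; exact omegaForm_self b _
      have e11 : ω (b 1) (b 1) = 0 := by rw [hω]; exact omegaForm_self b _
      have e01 : ω (b 0) (b 1) = 1 := by rw [hω]; exact omegaForm_basis b
      have e10 : ω (b 1) (b 0) = -1 := by
        have ha := omegaForm_antisymm b (b 0) (b 1)
        have hb1 := omegaForm_basis b
        rw [hω]; linear_combination ha - hb1
      have hc : c12 = c21 := by
        have h01 : B ((b 0 : V₀), (b 1 : V₀)) ((b 0 : V₀), (b 1 : V₀)) = 0 := hBalt _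
        rw [hd, e00, e01, e10, e11] at h01
        linear_combination h01
      have hBeqcomb : B = c11 • B1 + c22 • B2 + c12 • B3 := by
        apply LinearMap.ext
        rintro ⟨v1, v2⟩
        apply LinearMap.ext
        rintro ⟨w1, w2⟩
        simp only [LinearMap.add_apply, LinearMap.smul_apply, smul_eq_mul]
        rw [hd, hB1, hB2, hB3, hc]
        ring
      rw [hBeqcomb]
      have m1 : B1 ∈ Submodule.span k (Set.range ![B1, B2, B3]) :=
        Submodule.subset_span (Set.mem_range.mpr ⟨(0 : Fin 3), rfl⟩)
      have m2 : B2 ∈ Submodule.span k (Set.range ![B1, B2, B3]) :=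
        Submodule.subset_span (Set.mem_range.mpr ⟨(1 : Fin 3), rfl⟩)
      have m3 : B3 ∈ Submodule.span k (Set.range ![B1, B2, B3]) :=
        Submodule.subset_span (Set.mem_range.mpr ⟨(2 : Fin 3), rfl⟩)
      exact Submodule.add_mem _ (Submodule.add_mem _ (Submodule.smul_mem _ _ m1)
        (Submodule.smul_mem _ _ m2)) (Submodule.smul_mem _ _ m3)
  · have e01 : ω (b 0) (b 1) = 1 := by rw [hω]; exact omegaForm_basis b
    have hli : LinearIndependent k ![B1, B2, B3] := by
      refine (Fintype.linearIndependent_iff (v := ![B1, B2, B3])).mpr ?_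
      intro c hc
      have heval : ∀ (v w : V₀ × V₀),
          c 0 * B1 v w + c 1 * B2 v w + c 2 * B3 v w = 0 := by
        intro v w
        have h := LinearMap.congr_fun (LinearMap.congr_fun hc v) w
        rw [Fin.sum_univ_three] at h
        simpa using h
      have h0 : c 0 = 0 := by
        have h := heval ((b 0 : V₀), 0) ((b 1 : V₀), 0)
        rw [hB1, hB2, hB3] at h
        simp only [map_zero, LinearMap.zero_apply, LinearMap.map_zero] at h
        rw [e01] at h
        linear_combination h
      have h1 : c 1 = 0 := by
        have h := heval ((0 : V₀), (b 0 : V₀)) ((0 : V₀), (b 1 : V₀))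
        rw [hB1, hB2, hB3] at h
        simp only [map_zero, LinearMap.zero_apply, LinearMap.map_zero] at h
        rw [e01] at h
        linear_combination h
      have h2 : c 2 = 0 := by
        have h := heval ((b 0 : V₀), 0) ((0 : V₀), (b 1 : V₀))
        rw [hB1, hB2, hB3] at h
        simp only [map_zero, LinearMap.zero_apply, LinearMap.map_zero] at h
        rw [e01] at h
        linear_combination h
      intro i; fin_cases i <;> assumption
    rw [finrank_span_eq_card hli]
    simp
end

section
/- Let k be an algebraically closed field, φ₁ : G → GL(V₁) an irreducible 2-dimensional representation of a group G, and μ : G → kˣ a character such that det∘φ₁ ≠ μ (i.e. det(φ₁(g)) ≠ μ(g) for some g). Let φ₂ : G → GL(V₂) be a 2-dimensional representation for which there exists a nondegenerate bilinear pairing P : V₁ × V₂ → k with P(φ₁(g)v, φ₂(g)w) = μ(g)·P(v,w) for all g, v, w (so φ₂ ≅ φ₁^∨ ⊗ μ). Consider the representation φ = φ₁ ⊕ φ₂ on V = V₁ ⊕ V₂. Then the space of alternating bilinear forms B on V satisfying B(φ(g)v, φ(g)w) = μ(g)·B(v,w) for all g, v, w has dimension exactly 1 over k. -/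
set_option synthInstance.maxHeartbeats 1000000

section Aux

variable {k : Type*} [Field k]

lemma alt_antisymm {V : Type*} [AddCommGroup V] [Module k V]
    (B : V →ₗ[k] V →ₗ[k] k) (halt : ∀ v, B v v = 0) (x y : V) :
    B x y = - B y x := by
  have h := halt (x + y)
  simp only [map_add, LinearMap.add_apply, halt x, halt y] at h
  linear_combination h

lemma alt_expand {V : Type*} [AddCommGroup V] [Module k V]
    (e : Module.Basis (Fin 2) k V) (B : V →ₗ[k] V →ₗ[k] k) (halt : ∀ v, B v v = 0)
    (x y : V) :
    B x y = (e.repr x 0 * e.repr y 1 - e.repr x 1 * e.repr y 0) * B (e 0) (e 1) := by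
  have hx : x = e.repr x 0 • e 0 + e.repr x 1 • e 1 := by
    have := e.sum_repr x
    rw [Fin.sum_univ_two] at this
    exact this.symm
  have hy : y = e.repr y 0 • e 0 + e.repr y 1 • e 1 := by
    have := e.sum_repr y
    rw [Fin.sum_univ_two] at this
    exact this.symm
  have h10 : B (e 1) (e 0) = - B (e 0) (e 1) := alt_antisymm B halt _ _
  conv_lhs => rw [hx, hy]
  simp only [map_add, map_smul, LinearMap.add_apply, LinearMap.smul_apply,
    smul_eq_mul, halt, h10]
  ring

lemma basis_eq_zero {V : Type*} [AddCommGroup V] [Module k V]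
    (e : Module.Basis (Fin 2) k V) (x : V) (h0 : e.repr x 0 = 0) (h1 : e.repr x 1 = 0) :
    x = 0 := by
  have hx : x = e.repr x 0 • e 0 + e.repr x 1 • e 1 := by
    have := e.sum_repr x
    rw [Fin.sum_univ_two] at this
    exact this.symm
  rw [h0, h1] at hx
  simpa using hx

end Aux

section LemA
variable {k : Type*} [Field k]

lemma lemA {V G : Type*} [AddCommGroup V] [Module k V] [FiniteDimensional k V] [Group G]
    (hdim : Module.finrank k V = 2) (φ : G →* (V ≃ₗ[k] V)) (μ : G →* kˣ)
    (hdet : ∃ g : G, LinearMap.det ((φ g : V →ₗ[k] V)) ≠ (μ g : k))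
    (B : V →ₗ[k] V →ₗ[k] k) (halt : ∀ v, B v v = 0)
    (hequiv : ∀ (g : G) (v w : V), B (φ g v) (φ g w) = (μ g : k) * B v w) :
    B = 0 := by
  obtain ⟨g, hg⟩ := hdet
  let e := Module.finBasisOfFinrankEq k V hdim
  have key := alt_expand e B halt
  have hb : B (e 0) (e 1) = 0 := by
    by_contra hb
    apply hg
    have h1 := hequiv g (e 0) (e 1)
    rw [key (φ g (e 0)) (φ g (e 1)), key (e 0) (e 1)] at h1
    simp only [Module.Basis.repr_self, Finsupp.single_apply] at h1
    norm_num at h1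
    have hdetc : LinearMap.det ((φ g : V →ₗ[k] V)) =
        e.repr (φ g (e 0)) 0 * e.repr (φ g (e 1)) 1 -
          e.repr (φ g (e 1)) 0 * e.repr (φ g (e 0)) 1 := by
      rw [← LinearMap.det_toMatrix e, Matrix.det_fin_two]
      simp [LinearMap.toMatrix_apply]
    rw [hdetc]
    have h2 := h1.resolve_right hb
    linear_combination h2
  ext x y
  rw [key x y, hb, mul_zero]
  rfl

end LemA

section Schur
variable {k : Type*} [Field k]

lemma schur_pairing {V₁ V₂ G : Type*} [IsAlgClosed k]
    [AddCommGroup V₁] [Module k V₁] [FiniteDimensional k V₁]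
    [AddCommGroup V₂] [Module k V₂] [FiniteDimensional k V₂] [Group G]
    (hdim₁ : Module.finrank k V₁ = 2) (hdim₂ : Module.finrank k V₂ = 2)
    (φ₁ : G →* (V₁ ≃ₗ[k] V₁)) (φ₂ : G →* (V₂ ≃ₗ[k] V₂))
    (hirr₁ : ∀ W : Submodule k V₁, (∀ g : G, ∀ v ∈ W, φ₁ g v ∈ W) → W = ⊥ ∨ W = ⊤)
    (μ : G →* kˣ)
    (P : V₁ →ₗ[k] V₂ →ₗ[k] k)
    (hPleft : ∀ v : V₁, (∀ w : V₂, P v w = 0) → v = 0)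
    (hPequiv : ∀ (g : G) (v : V₁) (w : V₂), P (φ₁ g v) (φ₂ g w) = (μ g : k) * P v w)
    (Q : V₁ →ₗ[k] V₂ →ₗ[k] k)
    (hQ : ∀ (g : G) (v : V₁) (w : V₂), Q (φ₁ g v) (φ₂ g w) = (μ g : k) * Q v w) :
    ∃ c : k, ∀ v w, Q v w = c * P v w := by
  have hPinj : Function.Injective P := by
    rw [← LinearMap.ker_eq_bot, LinearMap.ker_eq_bot']
    intro v hv
    exact hPleft v fun w => by rw [hv]; rfl
  have hfr : Module.finrank k V₁ = Module.finrank k (V₂ →ₗ[k] k) := by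
    rw [hdim₁]
    exact ((Subspace.dual_finrank_eq (K := k) (V := V₂)).trans hdim₂).symm
  have hPbij : Function.Bijective P :=
    ⟨hPinj, (LinearMap.injective_iff_surjective_of_finrank_eq_finrank hfr).mp hPinj⟩
  let pe : V₁ ≃ₗ[k] (V₂ →ₗ[k] k) := LinearEquiv.ofBijective P hPbij
  let T : Module.End k V₁ := (pe.symm : (V₂ →ₗ[k] k) →ₗ[k] V₁) ∘ₗ Q
  have hT : ∀ v w, P (T v) w = Q v w := by
    intro v w
    have h : P (T v) = Q v := by
      show pe (pe.symm (Q v)) = Q v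
      exact pe.apply_symm_apply _
    rw [h]
  have hcomm : ∀ (g : G) (v : V₁), T (φ₁ g v) = φ₁ g (T v) := by
    intro g v
    apply hPinj
    ext w
    obtain ⟨u, rfl⟩ : ∃ u, φ₂ g u = w := ⟨(φ₂ g).symm w, (φ₂ g).apply_symm_apply w⟩
    calc P (T (φ₁ g v)) (φ₂ g u) = Q (φ₁ g v) (φ₂ g u) := hT _ _
      _ = (μ g : k) * Q v u := hQ g v u
      _ = (μ g : k) * P (T v) u := by rw [hT]
      _ = P (φ₁ g (T v)) (φ₂ g u) := (hPequiv g (T v) u).symm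
  have : Nontrivial V₁ := Module.nontrivial_of_finrank_pos (R := k) (by rw [hdim₁]; norm_num)
  obtain ⟨c, hc⟩ := Module.End.exists_eigenvalue T
  have hinv : ∀ g : G, ∀ v ∈ Module.End.eigenspace T c, φ₁ g v ∈ Module.End.eigenspace T c := by
    intro g v hv
    rw [Module.End.mem_eigenspace_iff] at hv ⊢
    rw [hcomm, hv, map_smul]
  have hW : Module.End.eigenspace T c = ⊤ :=
    (hirr₁ (Module.End.eigenspace T c) hinv).resolve_left hc
  refine ⟨c, fun v w => ?_⟩
  have hv : T v = c • v := by
    rw [← Module.End.mem_eigenspace_iff, hW]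
    trivial
  rw [← hT, hv, map_smul, LinearMap.smul_apply, smul_eq_mul]

end Schur

section LemC
variable {k : Type*} [Field k]

lemma lemC {V₁ V₂ G : Type*}
    [AddCommGroup V₁] [Module k V₁] [FiniteDimensional k V₁]
    [AddCommGroup V₂] [Module k V₂] [FiniteDimensional k V₂] [Group G]
    (hdim₁ : Module.finrank k V₁ = 2) (hdim₂ : Module.finrank k V₂ = 2)
    (φ₁ : G →* (V₁ ≃ₗ[k] V₁)) (φ₂ : G →* (V₂ ≃ₗ[k] V₂))
    (μ : G →* kˣ)
    (hdet : ∃ g : G, LinearMap.det ((φ₁ g : V₁ →ₗ[k] V₁)) ≠ (μ g : k))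
    (P : V₁ →ₗ[k] V₂ →ₗ[k] k)
    (hPleft : ∀ v : V₁, (∀ w : V₂, P v w = 0) → v = 0)
    (hPright : ∀ w : V₂, (∀ v : V₁, P v w = 0) → w = 0)
    (hPequiv : ∀ (g : G) (v : V₁) (w : V₂), P (φ₁ g v) (φ₂ g w) = (μ g : k) * P v w)
    (B₂ : V₂ →ₗ[k] V₂ →ₗ[k] k) (halt : ∀ w, B₂ w w = 0)
    (hequiv : ∀ (g : G) (v w : V₂), B₂ (φ₂ g v) (φ₂ g w) = (μ g : k) * B₂ v w) :
    B₂ = 0 := by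
  let f := Module.finBasisOfFinrankEq k V₂ hdim₂
  have key := alt_expand f B₂ halt
  rcases eq_or_ne (B₂ (f 0) (f 1)) 0 with hb | hb
  · ext x y
    rw [key x y, hb, mul_zero]
    rfl
  · exfalso
    set b := B₂ (f 0) (f 1) with hbdef
    have h10 : B₂ (f 1) (f 0) = -b := alt_antisymm B₂ halt _ _
    let T : V₁ →ₗ[k] V₂ :=
      b⁻¹ • (((P.flip (f 1)).smulRight (f 0)) - ((P.flip (f 0)).smulRight (f 1)))
    have hTv : ∀ v, T v = (b⁻¹ * P v (f 1)) • f 0 - (b⁻¹ * P v (f 0)) • f 1 := by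
      intro v
      simp only [T, LinearMap.smul_apply, LinearMap.sub_apply, LinearMap.smulRight_apply,
        LinearMap.flip_apply, smul_sub, smul_smul]
    have hT : ∀ v w, B₂ (T v) w = P v w := by
      intro v w
      have hw : w = f.repr w 0 • f 0 + f.repr w 1 • f 1 := by
        have := f.sum_repr w
        rw [Fin.sum_univ_two] at this
        exact this.symm
      rw [hTv v]
      nth_rewrite 1 [hw]
      nth_rewrite 3 [hw]
      simp only [map_add, map_sub, map_smul, LinearMap.add_apply, LinearMap.sub_apply,
        LinearMap.smul_apply, smul_eq_mul, halt, h10, ← hbdef]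
      field_simp
      ring
    have hnd : ∀ x : V₂, (∀ w, B₂ x w = 0) → x = 0 := by
      intro x hx
      have h1 := hx (f 1)
      have h0 := hx (f 0)
      rw [key x (f 1)] at h1
      rw [key x (f 0)] at h0
      simp only [Module.Basis.repr_self, Finsupp.single_apply, ← hbdef] at h1 h0
      norm_num at h1 h0
      exact basis_eq_zero f x (h1.resolve_right hb) ((h0.resolve_right hb))
    have hTcomm : ∀ (g : G) (v : V₁), T (φ₁ g v) = φ₂ g (T v) := by
      intro g v
      have hz : ∀ w, B₂ (T (φ₁ g v) - φ₂ g (T v)) w = 0 := by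
        intro w
        obtain ⟨u, rfl⟩ : ∃ u, φ₂ g u = w := ⟨(φ₂ g).symm w, (φ₂ g).apply_symm_apply w⟩
        rw [map_sub, LinearMap.sub_apply, hT, hequiv, hT, hPequiv]
        ring
      have := hnd _ hz
      rwa [sub_eq_zero] at this
    have hTinj : ∀ v, T v = 0 → v = 0 := by
      intro v hv
      refine hPleft v fun w => ?_
      rw [← hT v w, hv, map_zero]
      rfl
    have : Nontrivial V₁ := Module.nontrivial_of_finrank_pos (R := k) (by rw [hdim₁]; norm_num)
    obtain ⟨v', hv'⟩ := exists_ne (0 : V₁)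
    have hTv' : T v' ≠ 0 := fun h => hv' (hTinj v' h)
    obtain ⟨v, hv⟩ : ∃ v, P v (T v') ≠ 0 := by
      by_contra h
      push_neg at h
      exact hTv' (hPright _ h)
    let C : V₁ →ₗ[k] V₁ →ₗ[k] k := (B₂.comp T).compl₂ T
    have hCalt : ∀ x, C x x = 0 := fun x => halt (T x)
    have hCequiv : ∀ (g : G) (x y : V₁), C (φ₁ g x) (φ₁ g y) = (μ g : k) * C x y := by
      intro g x y
      show B₂ (T (φ₁ g x)) (T (φ₁ g y)) = (μ g : k) * B₂ (T x) (T y)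
      rw [hTcomm, hTcomm, hequiv]
    have hC0 := lemA hdim₁ φ₁ μ hdet C hCalt hCequiv
    have : C v v' = 0 := by rw [hC0]; rfl
    rw [show C v v' = B₂ (T v) (T v') from rfl, hT] at this
    exact hv this

end LemC

/-- For `φ = φ₁ ⊕ φ₂` with `φ₁` irreducible `2`-dimensional, `det φ₁ ≠ μ`, and
`φ₂ ≅ φ₁^∨ ⊗ μ` (via a nondegenerate `μ`-equivariant pairing), the space of
`μ`-equivariant alternating bilinear forms has dimension `1`. -/
theorem stmt_12 {k G V₁ V₂ : Type*} [Field k] [IsAlgClosed k]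
    [AddCommGroup V₁] [Module k V₁] [FiniteDimensional k V₁]
    [AddCommGroup V₂] [Module k V₂] [FiniteDimensional k V₂] [Group G]
    (hdim₁ : Module.finrank k V₁ = 2) (hdim₂ : Module.finrank k V₂ = 2)
    (φ₁ : G →* (V₁ ≃ₗ[k] V₁)) (φ₂ : G →* (V₂ ≃ₗ[k] V₂))
    (hirr₁ : ∀ W : Submodule k V₁, (∀ g : G, ∀ v ∈ W, φ₁ g v ∈ W) → W = ⊥ ∨ W = ⊤)
    (μ : G →* kˣ)
    (hdet : ∃ g : G, LinearMap.det (φ₁ g : V₁ →ₗ[k] V₁) ≠ (μ g : k))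
    (P : V₁ →ₗ[k] V₂ →ₗ[k] k)
    (hPleft : ∀ v : V₁, (∀ w : V₂, P v w = 0) → v = 0)
    (hPright : ∀ w : V₂, (∀ v : V₁, P v w = 0) → w = 0)
    (hPequiv : ∀ (g : G) (v : V₁) (w : V₂), P (φ₁ g v) (φ₂ g w) = (μ g : k) * P v w) :
    ∃ S : Submodule k (((V₁ × V₂) →ₗ[k] (V₁ × V₂) →ₗ[k] k)),
      (S : Set (((V₁ × V₂) →ₗ[k] (V₁ × V₂) →ₗ[k] k))) =
        {B | (∀ v, B v v = 0) ∧
          ∀ (g : G) (v w : V₁ × V₂),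
            B (φ₁ g v.1, φ₂ g v.2) (φ₁ g w.1, φ₂ g w.2) = (μ g : k) * B v w} ∧
      Module.finrank k S = 1 := by
  classical
  -- the distinguished form B₀ (x,y) := P x.1 y.2 - P y.1 x.2
  let A1 : (V₁ × V₂) →ₗ[k] (V₁ × V₂) →ₗ[k] k :=
    LinearMap.compl₁₂ P (LinearMap.fst k V₁ V₂) (LinearMap.snd k V₁ V₂)
  let B₀ : (V₁ × V₂) →ₗ[k] (V₁ × V₂) →ₗ[k] k := A1 - A1.flip
  have hB₀ : ∀ x y : V₁ × V₂, B₀ x y = P x.1 y.2 - P y.1 x.2 := by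
    intro x y
    simp [B₀, A1, LinearMap.compl₁₂_apply, LinearMap.flip_apply]
  -- B₀ is nonzero
  have : Nontrivial V₂ := Module.nontrivial_of_finrank_pos (R := k) (by rw [hdim₂]; norm_num)
  obtain ⟨w₀, hw₀⟩ := exists_ne (0 : V₂)
  obtain ⟨v₀, hv₀⟩ : ∃ v, P v w₀ ≠ 0 := by
    by_contra h
    push_neg at h
    exact hw₀ (hPright _ h)
  have hB₀ne : B₀ ≠ 0 := by
    intro h
    apply hv₀
    have := hB₀ (v₀, 0) (0, w₀)
    rw [h] at this
    simpa using this.symm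
  refine ⟨Submodule.span k {B₀}, ?_, finrank_span_singleton (K := k) (v := B₀) hB₀ne⟩
  ext B
  simp only [SetLike.mem_coe, Submodule.mem_span_singleton, Set.mem_setOf_eq]
  constructor
  · rintro ⟨c, rfl⟩
    constructor
    · intro v
      simp only [LinearMap.smul_apply, smul_eq_mul, hB₀ v v, sub_self, mul_zero]
    · intro g v w
      simp only [LinearMap.smul_apply, smul_eq_mul, hB₀]
      simp only [hPequiv]
      ring
  · rintro ⟨halt, hequiv⟩
    have hanti := alt_antisymm B halt
    -- the (1,1) block vanishes
    have h11 : ∀ v w : V₁, B (v, 0) (w, 0) = 0 := by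
      have := lemA hdim₁ φ₁ μ hdet
        (LinearMap.compl₁₂ B (LinearMap.inl k V₁ V₂) (LinearMap.inl k V₁ V₂))
        (fun v => halt _)
        (fun g v w => by
          have := hequiv g (v, 0) (w, 0)
          simpa using this)
      intro v w
      have h := LinearMap.congr_fun (LinearMap.congr_fun this v) w
      simpa using h
    -- the (2,2) block vanishes
    have h22 : ∀ v w : V₂, B (0, v) (0, w) = 0 := by
      have := lemC hdim₁ hdim₂ φ₁ φ₂ μ hdet P hPleft hPright hPequiv
        (LinearMap.compl₁₂ B (LinearMap.inr k V₁ V₂) (LinearMap.inr k V₁ V₂))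
        (fun v => halt _)
        (fun g v w => by
          have := hequiv g (0, v) (0, w)
          simpa using this)
      intro v w
      have h := LinearMap.congr_fun (LinearMap.congr_fun this v) w
      simpa using h
    -- the (1,2) block is a multiple of P
    obtain ⟨c, h12⟩ := schur_pairing hdim₁ hdim₂ φ₁ φ₂ hirr₁ μ P hPleft hPequiv
      (LinearMap.compl₁₂ B (LinearMap.inl k V₁ V₂) (LinearMap.inr k V₁ V₂))
      (fun g v w => by
        have := hequiv g (v, 0) (0, w)
        simpa using this)
    have h12' : ∀ (v : V₁) (w : V₂), B (v, 0) (0, w) = c * P v w := by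
      intro v w
      have h := h12 v w
      simpa using h
    refine ⟨c, ?_⟩
    refine LinearMap.ext fun x => LinearMap.ext fun y => ?_
    have hx : x = ((x.1, 0) : V₁ × V₂) + (0, x.2) := by simp
    have hy : y = ((y.1, 0) : V₁ × V₂) + (0, y.2) := by simp
    have lhs : (c • B₀) x y = c * (P x.1 y.2 - P y.1 x.2) := by
      rw [LinearMap.smul_apply, LinearMap.smul_apply, smul_eq_mul, hB₀ x y]
    rw [lhs]
    conv_rhs => rw [hx, hy]
    simp only [map_add, LinearMap.add_apply]
    rw [h11, h22, h12', hanti (0, x.2) (y.1, 0), h12']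
    ring
end
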